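/- arXiv:1112.3589 — 2 statements merged into one kernel-verified Lean document; each statement's English description precedes it below -/
import Mathlib

section
/- If λ>1, then the basin of attraction of the fixed point (0,0,ξ₀) of T_λ equals the open upper half-space: A((0,0,ξ₀)) = {(x,y,z)∈ℝ³ : z>0}. -/
noncomputable section

open Real Filter Topology Set MeasureTheory
open scoped Classical OnePoint

abbrev R3 := EuclideanSpace ℝ (Fin 3)

/-- The point (x,y,z) ∈ ℝ³. -/
def mk3 (x y z : ℝ) : R3 := (EuclideanSpace.equiv (Fin 3) ℝ).symm ![x, y, z]

/-- M(x,y) = max(|x|,|y|). -/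
def Mxy (x y : ℝ) : ℝ := max |x| |y|

/-- The map T₀ on the beam X = [−π/4,π/4]² × ℝ. -/
def T0 (x y z : ℝ) : R3 :=
  if x = 0 ∧ y = 0 then mk3 0 0 (Real.tanh z)
  else
    mk3 (x * Real.cos (Mxy x y) * Real.sin (Mxy x y) /
          (Real.sqrt (x ^ 2 + y ^ 2) * (Real.cos (Mxy x y) ^ 2 + Real.sinh z ^ 2)))
        (y * Real.cos (Mxy x y) * Real.sin (Mxy x y) /
          (Real.sqrt (x ^ 2 + y ^ 2) * (Real.cos (Mxy x y) ^ 2 + Real.sinh z ^ 2)))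
        (Real.sinh z * Real.cosh z / (Real.cos (Mxy x y) ^ 2 + Real.sinh z ^ 2))

/-- j(t) = ⌊(t+π/4)/(π/2)⌋. -/
def jfold (t : ℝ) : ℤ := ⌊(t + Real.pi / 4) / (Real.pi / 2)⌋

/-- t̂ = (−1)^{j(t)}·(t − j(t)·π/2), the folding of ℝ onto [−π/4,π/4] by reflections. -/
def fold (t : ℝ) : ℝ := (-1 : ℝ) ^ jfold t * (t - jfold t * (Real.pi / 2))

/-- The generalized tangent map T : ℝ³ → ℝ³ ∪ {∞} (one-point compactification). -/
def Tmap (v : R3) : OnePoint R3 :=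
  let w := T0 (fold (v 0)) (fold (v 1)) (v 2)
  if Even (jfold (v 0) + jfold (v 1)) then (w : OnePoint R3)
  else if w = 0 then ∞ else (((‖w‖ ^ 2)⁻¹ • w : R3) : OnePoint R3)

/-- T_λ = λ·T, with λ·∞ = ∞. -/
def Tl (l : ℝ) (v : R3) : OnePoint R3 := Option.map (fun w => l • w) (Tmap v)

/-- The extension of T_λ to ℝ³ ∪ {∞} sending ∞ ↦ ∞, so that iterates are defined;
`(TlHat l)^[k] ↑x ≠ ∞` says the orbit of x has not hit ∞ within the first k steps. -/
def TlHat (l : ℝ) (p : OnePoint R3) : OnePoint R3 := Option.bind p (Tl l)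

/-- The basin of attraction A(x₀) of a fixed point x₀ of T_λ: points whose orbit is
defined for all time and converges to x₀. -/
def basin (l : ℝ) (x0 : R3) : Set R3 :=
  {x | (∀ k : ℕ, (TlHat l)^[k] ↑x ≠ ∞) ∧
    ∀ ε > (0 : ℝ), ∃ N : ℕ, ∀ k ≥ N, ∀ w : R3, (TlHat l)^[k] ↑x = ↑w → ‖w - x0‖ < ε}



-- Part 0 : coordinates
lemma mk3_apply_0 (x y z : ℝ) : mk3 x y z 0 = x := rfl
lemma mk3_apply_1 (x y z : ℝ) : mk3 x y z 1 = y := rfl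
lemma mk3_apply_2 (x y z : ℝ) : mk3 x y z 2 = z := rfl
lemma smul_apply' (c : ℝ) (w : R3) (i : Fin 3) : (c • w) i = c * w i := rfl
lemma norm_sq_R3 (w : R3) : ‖w‖ ^ 2 = w 0 ^ 2 + w 1 ^ 2 + w 2 ^ 2 := by
  rw [EuclideanSpace.norm_eq, Real.sq_sqrt (by positivity)]
  simp [Fin.sum_univ_three, sq_abs]

lemma abs_coord_le_norm (w : R3) (i : Fin 3) : |w i| ≤ ‖w‖ := by
  have h1 : |w i| ^ 2 ≤ ‖w‖ ^ 2 := by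
    rw [norm_sq_R3, sq_abs]
    fin_cases i <;> simp <;> nlinarith [sq_nonneg (w 0), sq_nonneg (w 1), sq_nonneg (w 2)]
  exact (pow_le_pow_iff_left₀ (abs_nonneg _) (norm_nonneg _) two_ne_zero).mp h1

lemma norm_le_of_coords {w : R3} {t : ℝ} (h : ∀ i, |w i| ≤ t) : ‖w‖ ≤ 2 * t := by
  have ht : 0 ≤ t := le_trans (abs_nonneg _) (h 0)
  have h1 : ‖w‖ ^ 2 ≤ (2 * t) ^ 2 := by
    rw [norm_sq_R3]
    have h0 := h 0; have h1 := h 1; have h2 := h 2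
    have e0 := abs_le.mp h0; have e1 := abs_le.mp h1; have e2 := abs_le.mp h2
    nlinarith [sq_nonneg t]
  exact (pow_le_pow_iff_left₀ (norm_nonneg _) (by positivity) two_ne_zero).mp h1


lemma abs_neg_one_zpow' (j : ℤ) : |(-1 : ℝ) ^ j| = 1 := by
  rcases Int.even_or_odd j with h | h
  · rw [h.neg_one_zpow]; simp
  · rw [h.neg_one_zpow]; simp

-- Part 1 : fold
lemma fold_sub_bounds (t : ℝ) :
    -(Real.pi / 4) ≤ t - jfold t * (Real.pi / 2) ∧ t - jfold t * (Real.pi / 2) < Real.pi / 4 := by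
  have hpi : (0:ℝ) < Real.pi / 2 := by positivity
  have h1 : (jfold t : ℝ) ≤ (t + Real.pi / 4) / (Real.pi / 2) := Int.floor_le _
  have h2 : (t + Real.pi / 4) / (Real.pi / 2) < jfold t + 1 := Int.lt_floor_add_one _
  rw [le_div_iff₀ hpi] at h1
  rw [div_lt_iff₀ hpi] at h2
  constructor <;> nlinarith

lemma abs_fold_le_pi4 (t : ℝ) : |fold t| ≤ Real.pi / 4 := by
  obtain ⟨h1, h2⟩ := fold_sub_bounds t
  rw [fold, abs_mul, abs_neg_one_zpow', one_mul]
  rw [abs_le]; constructor <;> linarith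

lemma abs_fold_le_abs (t : ℝ) : |fold t| ≤ |t| := by
  obtain ⟨h1, h2⟩ := fold_sub_bounds t
  have hpi : (0:ℝ) < Real.pi / 4 := by positivity
  rw [fold, abs_mul, abs_neg_one_zpow', one_mul]
  rcases le_or_gt (jfold t) (-1) with hj | hj
  · have hj' : (jfold t : ℝ) ≤ -1 := by exact_mod_cast hj
    have ht : t ≤ -(Real.pi/4) := by nlinarith
    rw [abs_of_nonpos (by linarith : t ≤ 0), abs_le]
    constructor <;> nlinarith
  · rcases lt_or_ge (jfold t) 1 with hj2 | hj2
    · have : jfold t = 0 := by omega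
      simp [this]
    · have hj' : (1:ℝ) ≤ (jfold t : ℝ) := by exact_mod_cast hj2
      have ht : Real.pi/4 ≤ t := by nlinarith
      rw [abs_of_nonneg (by linarith : (0:ℝ) ≤ t), abs_le]
      constructor <;> nlinarith

lemma jfold_eq_zero {t : ℝ} (h : |t| < Real.pi / 4) : jfold t = 0 := by
  have hpi : (0:ℝ) < Real.pi / 2 := by positivity
  obtain ⟨h1, h2⟩ := abs_lt.mp h
  rw [jfold, Int.floor_eq_zero_iff]
  constructor
  · rw [le_div_iff₀ hpi]; · nlinarith
  · rw [div_lt_iff₀ hpi] <;> nlinarith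

lemma fold_eq_self {t : ℝ} (h : |t| < Real.pi / 4) : fold t = t := by
  rw [fold, jfold_eq_zero h]; push_cast; ring

lemma Tmap_even {v : R3} (hev : Even (jfold (v 0) + jfold (v 1))) :
    Tmap v = ((T0 (fold (v 0)) (fold (v 1)) (v 2) : R3) : OnePoint R3) := by
  simp only [Tmap]
  rw [if_pos hev]

lemma Tmap_odd {v : R3} (hev : ¬ Even (jfold (v 0) + jfold (v 1)))
    (hw : T0 (fold (v 0)) (fold (v 1)) (v 2) ≠ 0) :
    Tmap v = (((‖T0 (fold (v 0)) (fold (v 1)) (v 2)‖ ^ 2)⁻¹ •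
      T0 (fold (v 0)) (fold (v 1)) (v 2) : R3) : OnePoint R3) := by
  simp only [Tmap]
  rw [if_neg hev, if_neg hw]

lemma T0_special {x y z : ℝ} (h : x = 0 ∧ y = 0) : T0 x y z = mk3 0 0 (Real.tanh z) := by
  unfold T0; rw [if_pos h]

lemma T0_general {x y z : ℝ} (h : ¬(x = 0 ∧ y = 0)) : T0 x y z =
    mk3 (x * Real.cos (Mxy x y) * Real.sin (Mxy x y) /
          (Real.sqrt (x ^ 2 + y ^ 2) * (Real.cos (Mxy x y) ^ 2 + Real.sinh z ^ 2)))
        (y * Real.cos (Mxy x y) * Real.sin (Mxy x y) /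
          (Real.sqrt (x ^ 2 + y ^ 2) * (Real.cos (Mxy x y) ^ 2 + Real.sinh z ^ 2)))
        (Real.sinh z * Real.cosh z / (Real.cos (Mxy x y) ^ 2 + Real.sinh z ^ 2)) := by
  unfold T0; rw [if_neg h]

lemma Tl_coe (l : ℝ) (v : R3) (w : R3) (h : Tmap v = (w : OnePoint R3)) :
    Tl l v = ((l • w : R3) : OnePoint R3) := by
  rw [Tl, h]; rfl


lemma smul_mk3 (c x y z : ℝ) : c • mk3 x y z = mk3 (c*x) (c*y) (c*z) := by
  ext i; fin_cases i <;> rfl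

lemma Mxy_nonneg (x y : ℝ) : 0 ≤ Mxy x y := le_trans (abs_nonneg x) (le_max_left _ _)

lemma cosM_pos {x y : ℝ} (hx : |x| ≤ Real.pi/4) (hy : |y| ≤ Real.pi/4) :
    0 < Real.cos (Mxy x y) := by
  apply Real.cos_pos_of_mem_Ioo
  constructor
  · have := Mxy_nonneg x y; nlinarith [Real.pi_pos]
  · have : Mxy x y ≤ Real.pi/4 := max_le hx hy
    nlinarith [Real.pi_pos]

lemma sinM_nonneg {x y : ℝ} (hx : |x| ≤ Real.pi/4) (hy : |y| ≤ Real.pi/4) :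
    0 ≤ Real.sin (Mxy x y) := by
  apply Real.sin_nonneg_of_nonneg_of_le_pi (Mxy_nonneg x y)
  have : Mxy x y ≤ Real.pi/4 := max_le hx hy
  nlinarith [Real.pi_pos]

set_option maxHeartbeats 2000000 in
/-- The main step lemma. -/
lemma step (l : ℝ) (hl : 0 < l) (v : R3) (hz : v 2 ≠ 0) :
    ∃ (w : R3) (c : ℝ), Tl l v = (w : OnePoint R3) ∧ 0 ≤ c ∧ c ≤ 1 ∧
      w 2 * (c + Real.sinh (v 2) ^ 2) = l * (Real.sinh (v 2) * Real.cosh (v 2)) ∧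
      Mxy (w 0) (w 1) * (c + Real.sinh (v 2) ^ 2) ≤
        l * (Real.sin (Mxy (fold (v 0)) (fold (v 1))) * Real.cos (Mxy (fold (v 0)) (fold (v 1)))) ∧
      (|v 0| < Real.pi/4 → |v 1| < Real.pi/4 →
        c = Real.cos (Mxy (fold (v 0)) (fold (v 1))) ^ 2) := by
  have hp4 : |fold (v 0)| ≤ Real.pi/4 := abs_fold_le_pi4 _
  have hq4 : |fold (v 1)| ≤ Real.pi/4 := abs_fold_le_pi4 _
  have hcos : 0 < Real.cos (Mxy (fold (v 0)) (fold (v 1))) := cosM_pos hp4 hq4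
  have hsin : 0 ≤ Real.sin (Mxy (fold (v 0)) (fold (v 1))) := sinM_nonneg hp4 hq4
  generalize hp : fold (v 0) = p at *
  generalize hq : fold (v 1) = q at *
  generalize hzg : v 2 = z at *
  set M := Mxy p q with hM
  have hM0 : 0 ≤ M := Mxy_nonneg p q
  have hsh : Real.sinh z ≠ 0 := Real.sinh_ne_zero.mpr hz
  have hsh2 : 0 < Real.sinh z ^ 2 := by positivity
  have hch : 0 < Real.cosh z := Real.cosh_pos z
  have hchne : Real.cosh z ≠ 0 := ne_of_gt hch
  have hchsq : Real.cosh z ^ 2 = Real.sinh z ^ 2 + 1 := Real.cosh_sq z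
  have hD : 0 < Real.cos M ^ 2 + Real.sinh z ^ 2 := by positivity
  have hD' : 0 < Real.sin M ^ 2 + Real.sinh z ^ 2 := by positivity
  by_cases hev : Even (jfold (v 0) + jfold (v 1))
  · -- even parity
    by_cases h00 : p = 0 ∧ q = 0
    · -- T0 special branch
      have hM00 : M = 0 := by rw [hM, h00.1, h00.2]; simp [Mxy]
      have hT : Tmap v = ((mk3 0 0 (Real.tanh z) : R3) : OnePoint R3) := by
        have h := Tmap_even hev
        rw [hp, hq, hzg, T0_special h00] at h
        exact h
      refine ⟨l • mk3 0 0 (Real.tanh z), 1, ?_, zero_le_one, le_refl 1, ?_, ?_, ?_⟩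
      · rw [Tl, hT]; rfl
      · rw [smul_mk3, mk3_apply_2, Real.tanh_eq_sinh_div_cosh]
        field_simp
        linear_combination (-1 : ℝ) * hchsq
      · rw [smul_mk3, mk3_apply_0, mk3_apply_1, hM00]
        simp [Mxy]
      · intro _ _; rw [hM00]; simp
    · -- T0 general branch
      set r := Real.sqrt (p^2 + q^2) with hr
      have hpq : 0 < p^2 + q^2 := by
        rcases not_and_or.mp h00 with h | h
        · have h2 : 0 < p^2 := by positivity
          nlinarith [sq_nonneg q]
        · have h2 : 0 < q^2 := by positivity
          nlinarith [sq_nonneg p]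
      have hrpos : 0 < r := Real.sqrt_pos.mpr hpq
      have hr2 : r^2 = p^2 + q^2 := Real.sq_sqrt hpq.le
      have habsp : |p| ≤ r := by
        rw [hr, ← Real.sqrt_sq_eq_abs]
        exact Real.sqrt_le_sqrt (by nlinarith [sq_nonneg q])
      have habsq : |q| ≤ r := by
        rw [hr, ← Real.sqrt_sq_eq_abs]
        exact Real.sqrt_le_sqrt (by nlinarith [sq_nonneg p])
      have hT0 : T0 p q z = mk3 (p * Real.cos M * Real.sin M /
            (r * (Real.cos M ^2 + Real.sinh z ^2)))
          (q * Real.cos M * Real.sin M / (r * (Real.cos M ^2 + Real.sinh z ^2)))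
          (Real.sinh z * Real.cosh z / (Real.cos M ^2 + Real.sinh z ^2)) := by
        exact T0_general h00 (z := z)
      have hT : Tmap v = ((T0 p q z : R3) : OnePoint R3) := by
        have h := Tmap_even hev
        rw [hp, hq, hzg] at h
        exact h
      obtain ⟨K, hK⟩ : ∃ K : ℝ, K = l * (Real.cos M * Real.sin M /
        (r * (Real.cos M ^2 + Real.sinh z ^2))) := ⟨_, rfl⟩
      have hK0 : 0 ≤ K := by
        rw [hK]
        apply mul_nonneg hl.le
        apply div_nonneg (mul_nonneg hcos.le hsin) (by positivity)
      have hw : l • T0 p q z = mk3 (K * p) (K * q)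
          (l * (Real.sinh z * Real.cosh z / (Real.cos M ^2 + Real.sinh z ^2))) := by
        rw [hT0, smul_mk3, hK]
        congr 1 <;> ring
      refine ⟨l • T0 p q z, Real.cos M ^ 2, ?_, by positivity, ?_, ?_, ?_, fun _ _ => rfl⟩
      · rw [Tl, hT]; rfl
      · nlinarith [Real.sin_sq_add_cos_sq M]
      · rw [hw, mk3_apply_2]
        field_simp
      · rw [hw, mk3_apply_0, mk3_apply_1]
        have hMax : Mxy (K * p) (K * q) = K * Mxy p q := by
          show max |K * p| |K * q| = K * max |p| |q|
          rw [abs_mul, abs_mul, abs_of_nonneg hK0, ← mul_max_of_nonneg _ _ hK0]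
        rw [hMax]
        have h1 : K * Mxy p q ≤ K * r := by
          apply mul_le_mul_of_nonneg_left _ hK0
          exact max_le habsp habsq
        have h2 : K * r * (Real.cos M ^2 + Real.sinh z ^2) = l * (Real.sin M * Real.cos M) := by
          rw [hK]; field_simp
        calc K * Mxy p q * (Real.cos M ^2 + Real.sinh z ^2)
            ≤ K * r * (Real.cos M ^2 + Real.sinh z ^2) := mul_le_mul_of_nonneg_right h1 hD.le
          _ = l * (Real.sin M * Real.cos M) := h2
  · -- odd parity
    by_cases h00 : p = 0 ∧ q = 0
    · have hM00 : M = 0 := by rw [hM, h00.1, h00.2]; simp [Mxy]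
      have htanh : Real.tanh z ≠ 0 := by
        rw [Real.tanh_eq_sinh_div_cosh]
        exact div_ne_zero hsh hchne
      have hw0 : mk3 0 0 (Real.tanh z) ≠ (0 : R3) := by
        intro h
        have h2 : mk3 0 0 (Real.tanh z) 2 = (0:R3) 2 := by rw [h]
        rw [mk3_apply_2] at h2
        exact htanh h2
      have hnorm : ‖(mk3 0 0 (Real.tanh z) : R3)‖^2 = Real.tanh z ^ 2 := by
        rw [norm_sq_R3, mk3_apply_0, mk3_apply_1, mk3_apply_2]; ring
      have hT : Tmap v = (((‖(mk3 0 0 (Real.tanh z) : R3)‖ ^ 2)⁻¹ • mk3 0 0 (Real.tanh z) : R3) :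
          OnePoint R3) := by
        have hw0' : T0 (fold (v 0)) (fold (v 1)) (v 2) ≠ 0 := by
          rw [hp, hq, hzg, T0_special h00]; exact hw0
        have h := Tmap_odd hev hw0'
        rw [hp, hq, hzg, T0_special h00] at h
        exact h
      refine ⟨l • ((‖(mk3 0 0 (Real.tanh z) : R3)‖ ^ 2)⁻¹ • mk3 0 0 (Real.tanh z)), 0, ?_,
        le_refl 0, zero_le_one, ?_, ?_, ?_⟩
      · rw [Tl, hT]; rfl
      · rw [hnorm, smul_mk3, smul_mk3, mk3_apply_2, Real.tanh_eq_sinh_div_cosh]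
        rw [div_pow]
        field_simp
        ring
      · rw [hnorm, smul_mk3, smul_mk3, mk3_apply_0, mk3_apply_1, hM00]
        simp [Mxy]
      · intro h0 h1
        exact absurd (by rw [jfold_eq_zero h0, jfold_eq_zero h1]; exact Even.zero) hev
    · set r := Real.sqrt (p^2 + q^2) with hr
      have hpq : 0 < p^2 + q^2 := by
        rcases not_and_or.mp h00 with h | h
        · have h2 : 0 < p^2 := by positivity
          nlinarith [sq_nonneg q]
        · have h2 : 0 < q^2 := by positivity
          nlinarith [sq_nonneg p]
      have hrpos : 0 < r := Real.sqrt_pos.mpr hpq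
      have hrne : r ≠ 0 := ne_of_gt hrpos
      have hr2 : r^2 = p^2 + q^2 := Real.sq_sqrt hpq.le
      have habsp : |p| ≤ r := by
        rw [hr, ← Real.sqrt_sq_eq_abs]
        exact Real.sqrt_le_sqrt (by nlinarith [sq_nonneg q])
      have habsq : |q| ≤ r := by
        rw [hr, ← Real.sqrt_sq_eq_abs]
        exact Real.sqrt_le_sqrt (by nlinarith [sq_nonneg p])
      have hT0 : T0 p q z = mk3 (p * Real.cos M * Real.sin M /
            (r * (Real.cos M ^2 + Real.sinh z ^2)))
          (q * Real.cos M * Real.sin M / (r * (Real.cos M ^2 + Real.sinh z ^2)))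
          (Real.sinh z * Real.cosh z / (Real.cos M ^2 + Real.sinh z ^2)) := by
        exact T0_general h00 (z := z)
      have hw0 : T0 p q z ≠ (0 : R3) := by
        intro h
        have h2 : T0 p q z 2 = (0:R3) 2 := by rw [h]
        rw [hT0, mk3_apply_2] at h2
        have h2' : Real.sinh z * Real.cosh z / (Real.cos M ^2 + Real.sinh z ^2) = (0:ℝ) := h2
        have h3 : Real.sinh z * Real.cosh z ≠ 0 := mul_ne_zero hsh hchne
        exact h3 ((div_eq_zero_iff.mp h2').resolve_right hD.ne')
      have hkey : Real.sin M ^2 * Real.cos M ^2 + Real.sinh z^2 * Real.cosh z^2 =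
          (Real.cos M ^2 + Real.sinh z ^2) * (Real.sin M ^2 + Real.sinh z ^2) := by
        nlinarith [Real.sin_sq_add_cos_sq M, hchsq]
      have hnorm : ‖T0 p q z‖^2 =
          (Real.sin M ^2 + Real.sinh z ^2) / (Real.cos M ^2 + Real.sinh z ^2) := by
        rw [norm_sq_R3, hT0, mk3_apply_0, mk3_apply_1, mk3_apply_2]
        rw [div_pow, div_pow, div_pow, ← add_div, mul_pow r]
        rw [show (p * Real.cos M * Real.sin M)^2 + (q * Real.cos M * Real.sin M)^2
            = r^2 * (Real.cos M * Real.sin M)^2 from by rw [hr2]; ring]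
        rw [mul_div_mul_left _ _ (pow_ne_zero 2 hrne)]
        rw [← add_div]
        rw [show (Real.cos M * Real.sin M)^2 + (Real.sinh z * Real.cosh z)^2
            = (Real.cos M ^2 + Real.sinh z ^2) * (Real.sin M ^2 + Real.sinh z ^2) from by
          linear_combination hkey]
        rw [show (Real.cos M ^2 + Real.sinh z ^2)^2
            = (Real.cos M ^2 + Real.sinh z ^2) * (Real.cos M ^2 + Real.sinh z ^2) from pow_two _,
          mul_div_mul_left _ _ hD.ne']
      have hT : Tmap v = (((‖T0 p q z‖ ^ 2)⁻¹ • T0 p q z : R3) : OnePoint R3) := by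
        have hw0' : T0 (fold (v 0)) (fold (v 1)) (v 2) ≠ 0 := by
          rw [hp, hq, hzg]; exact hw0
        have h := Tmap_odd hev hw0'
        rw [hp, hq, hzg] at h
        exact h
      set E := Real.sin M ^2 + Real.sinh z ^2 with hE
      set Dd := Real.cos M ^2 + Real.sinh z ^2 with hDd
      have hinv : (‖T0 p q z‖^2)⁻¹ = Dd / E := by rw [hnorm, inv_div]
      obtain ⟨K, hK⟩ : ∃ K : ℝ, K = l * (Dd / E * (Real.cos M * Real.sin M / (r * Dd))) :=
        ⟨_, rfl⟩
      have hK0 : 0 ≤ K := by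
        rw [hK]
        apply mul_nonneg hl.le
        apply mul_nonneg (div_nonneg hD.le hD'.le)
        apply div_nonneg (mul_nonneg hcos.le hsin) (by positivity)
      have hw : l • ((‖T0 p q z‖ ^ 2)⁻¹ • T0 p q z) = mk3 (K * p) (K * q)
          (l * (Dd / E * (Real.sinh z * Real.cosh z / Dd))) := by
        rw [hinv, hT0, smul_mk3, smul_mk3, hK]
        congr 1 <;> ring
      refine ⟨l • ((‖T0 p q z‖ ^ 2)⁻¹ • T0 p q z), Real.sin M ^ 2, ?_, by positivity, ?_,
        ?_, ?_, ?_⟩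
      · rw [Tl, hT]; rfl
      · nlinarith [Real.sin_sq_add_cos_sq M]
      · rw [hw, mk3_apply_2]
        have hEne : E ≠ 0 := hD'.ne'
        have hDne : Dd ≠ 0 := hD.ne'
        field_simp
        ring
      · rw [hw, mk3_apply_0, mk3_apply_1]
        have hMax : Mxy (K * p) (K * q) = K * Mxy p q := by
          show max |K * p| |K * q| = K * max |p| |q|
          rw [abs_mul, abs_mul, abs_of_nonneg hK0, ← mul_max_of_nonneg _ _ hK0]
        rw [hMax]
        have h1 : K * Mxy p q ≤ K * r := by
          apply mul_le_mul_of_nonneg_left _ hK0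
          exact max_le habsp habsq
        have h2 : K * r * E = l * (Real.sin M * Real.cos M) := by
          rw [hK]; field_simp
        calc K * Mxy p q * E ≤ K * r * E := mul_le_mul_of_nonneg_right h1 hD'.le
          _ = l * (Real.sin M * Real.cos M) := h2
      · intro h0 h1
        exact absurd (by rw [jfold_eq_zero h0, jfold_eq_zero h1]; exact Even.zero) hev



lemma sinh_le_mul_cosh {x : ℝ} (hx : 0 ≤ x) : Real.sinh x ≤ x * Real.cosh x := by
  have key : MonotoneOn (fun t => t * Real.cosh t - Real.sinh t) (Set.Ici (0:ℝ)) := by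
    apply monotoneOn_of_deriv_nonneg (convex_Ici 0)
    · exact ((continuous_id.mul Real.continuous_cosh).sub Real.continuous_sinh).continuousOn
    · intro t _
      apply DifferentiableAt.differentiableWithinAt
      exact (differentiableAt_id.mul (Real.differentiable_cosh t)).sub (Real.differentiable_sinh t)
    · intro t ht
      rw [interior_Ici, Set.mem_Ioi] at ht
      have h1 : HasDerivAt (fun t => t * Real.cosh t - Real.sinh t)
          (1 * Real.cosh t + t * Real.sinh t - Real.cosh t) t :=
        ((hasDerivAt_id t).mul (Real.hasDerivAt_cosh t)).sub (Real.hasDerivAt_sinh t)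
      rw [h1.deriv]
      have h2 : 0 ≤ Real.sinh t := Real.sinh_nonneg_iff.mpr ht.le
      nlinarith
  have h0 := key (Set.self_mem_Ici) hx hx
  simp only [Real.sinh_zero, Real.cosh_zero] at h0
  linarith [h0]

lemma le_sinh_mul_cosh {x : ℝ} (hx : 0 ≤ x) : x ≤ Real.sinh x * Real.cosh x := by
  have h1 : x ≤ Real.sinh x := Real.self_le_sinh_iff.mpr hx
  nlinarith [Real.one_le_cosh x, Real.sinh_nonneg_iff.mpr hx]

lemma tanh_sub_tanh (a b : ℝ) : Real.tanh a - Real.tanh b =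
    Real.sinh (a - b) / (Real.cosh a * Real.cosh b) := by
  rw [Real.tanh_eq_sinh_div_cosh, Real.tanh_eq_sinh_div_cosh, Real.sinh_sub]
  have ha := Real.cosh_pos a
  have hb := Real.cosh_pos b
  field_simp

lemma tanh_monotone : Monotone Real.tanh := by
  intro a b hab
  have h := tanh_sub_tanh b a
  have h2 : 0 ≤ Real.sinh (b - a) := Real.sinh_nonneg_iff.mpr (by linarith)
  have h3 : 0 < Real.cosh b * Real.cosh a := mul_pos (Real.cosh_pos _) (Real.cosh_pos _)
  nlinarith [div_nonneg h2 h3.le]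

lemma tanh_pos {x : ℝ} (hx : 0 < x) : 0 < Real.tanh x := by
  rw [Real.tanh_eq_sinh_div_cosh]
  exact div_pos (Real.sinh_pos_iff.mpr hx) (Real.cosh_pos _)

lemma tanh_lt_one (x : ℝ) : Real.tanh x < 1 := by
  rw [Real.tanh_eq_sinh_div_cosh, div_lt_one (Real.cosh_pos _)]
  nlinarith [Real.cosh_sub_sinh x, Real.exp_pos (-x)]

/-- chord inequality : z < l·tanh z for 0 < z < ξ0. -/
lemma chord_lt {l ξ0 : ℝ} (hl : 0 < l) (hξ : 0 < ξ0) (hfix : ξ0 = l * Real.tanh ξ0)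
    {z : ℝ} (h1 : 0 < z) (h2 : z < ξ0) : z < l * Real.tanh z := by
  have htp : 0 < Real.tanh ξ0 := tanh_pos hξ
  have key : z * Real.tanh ξ0 < ξ0 * Real.tanh z := by
    rw [Real.tanh_eq_sinh_div_cosh, Real.tanh_eq_sinh_div_cosh]
    rw [mul_div_assoc', mul_div_assoc', div_lt_div_iff₀ (Real.cosh_pos _) (Real.cosh_pos _)]
    -- z * sinh ξ0 * cosh z < ξ0 * sinh z * cosh ξ0
    obtain ⟨e, he, hze⟩ : ∃ e : ℝ, 0 < e ∧ ξ0 = z + e := ⟨ξ0 - z, by linarith, by ring⟩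
    rw [hze, Real.sinh_add, Real.cosh_add]
    have f1 : Real.sinh e ≤ e * Real.cosh e := sinh_le_mul_cosh he.le
    have f2 : z ≤ Real.sinh z * Real.cosh z := le_sinh_mul_cosh h1.le
    have g1 : 0 < Real.sinh e := Real.sinh_pos_iff.mpr he
    have g2 : 0 < Real.sinh z := Real.sinh_pos_iff.mpr h1
    have g3 : 0 < Real.cosh e := Real.cosh_pos _
    have g4 : 0 < Real.cosh z := Real.cosh_pos _
    have g5 : Real.cosh z ^ 2 = Real.sinh z ^2 + 1 := Real.cosh_sq z
    have g6 : z * Real.sinh e * Real.cosh z ^ 2 = z * Real.sinh e * Real.sinh z ^2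
        + z * Real.sinh e := by linear_combination (z * Real.sinh e) * g5
    nlinarith [mul_le_mul_of_nonneg_right f2 g1.le,
      mul_le_mul_of_nonneg_right f1 (mul_nonneg g2.le g4.le),
      mul_pos (mul_pos he g2) g1, g6, mul_pos g2 g1]
  have hli : l = ξ0 / Real.tanh ξ0 := by
    rw [eq_div_iff htp.ne']; linarith
  rw [hli, div_mul_eq_mul_div, lt_div_iff₀ htp, mul_comm (ξ0) (Real.tanh z)]
  linarith [key]

/-- tangent line inequality : tanh z ≤ tanh ξ0 + (z-ξ0)/cosh²ξ0 for z ≥ 0. -/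
lemma tangent_le {ξ0 : ℝ} (hξ : 0 < ξ0) {z : ℝ} (hz : 0 ≤ z) :
    Real.tanh z ≤ Real.tanh ξ0 + (z - ξ0) / Real.cosh ξ0 ^ 2 := by
  have hchz : 0 < Real.cosh z := Real.cosh_pos _
  have hchξ : 0 < Real.cosh ξ0 := Real.cosh_pos _
  -- reduces to sinh d * cosh ξ0 ≤ d * cosh z  where  d = z - ξ0
  have main : Real.sinh (z - ξ0) * Real.cosh ξ0 ≤ (z - ξ0) * Real.cosh z := by
    rcases le_or_gt ξ0 z with hc | hc
    · obtain ⟨d, hd, hzd⟩ : ∃ d : ℝ, 0 ≤ d ∧ z = ξ0 + d := ⟨z - ξ0, by linarith, by ring⟩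
      rw [hzd]
      have e1 : ξ0 + d - ξ0 = d := by ring
      rw [e1, Real.cosh_add]
      have f1 : Real.sinh d ≤ d * Real.cosh d := sinh_le_mul_cosh hd
      have g1 : 0 ≤ Real.sinh d := Real.sinh_nonneg_iff.mpr hd
      have g2 : 0 ≤ Real.sinh ξ0 := Real.sinh_nonneg_iff.mpr hξ.le
      nlinarith [mul_le_mul_of_nonneg_right f1 hchξ.le, mul_nonneg (mul_nonneg hd g2) g1]
    · obtain ⟨e, he, hze⟩ : ∃ e : ℝ, 0 < e ∧ z = ξ0 - e := ⟨ξ0 - z, by linarith, by ring⟩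
      have heξ : e ≤ ξ0 := by linarith
      rw [hze]
      have e1 : ξ0 - e - ξ0 = -e := by ring
      rw [e1, Real.sinh_neg, Real.cosh_sub]
      -- goal : -sinh e * cosh ξ0 ≤ -e * (cosh ξ0 cosh e - sinh ξ0 sinh e)
      have f2 : e ≤ Real.sinh e * Real.cosh e := le_sinh_mul_cosh he.le
      have f3 : 0 ≤ Real.sinh (ξ0 - e) := Real.sinh_nonneg_iff.mpr (by linarith)
      rw [Real.sinh_sub] at f3
      -- f3 : 0 ≤ sinh ξ0 cosh e - cosh ξ0 sinh e
      have g1 : 0 < Real.sinh e := Real.sinh_pos_iff.mpr he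
      have g3 : 0 < Real.cosh e := Real.cosh_pos _
      have g5 : Real.cosh e ^ 2 = Real.sinh e ^2 + 1 := Real.cosh_sq e
      have key : (e * (Real.cosh ξ0 * Real.cosh e - Real.sinh ξ0 * Real.sinh e)
          - Real.sinh e * Real.cosh ξ0) * Real.cosh e ≤ 0 := by
        have g6 : e * Real.cosh ξ0 * Real.cosh e ^2 = e * Real.cosh ξ0 * Real.sinh e ^2
            + e * Real.cosh ξ0 := by linear_combination (e * Real.cosh ξ0) * g5
        nlinarith [mul_le_mul_of_nonneg_left f3 (mul_nonneg he.le g1.le),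
          mul_le_mul_of_nonneg_right f2 hchξ.le, g6]
      by_contra hcon
      push_neg at hcon
      nlinarith [mul_pos (by linarith : (0:ℝ) < e * (Real.cosh ξ0 * Real.cosh e
        - Real.sinh ξ0 * Real.sinh e) - Real.sinh e * Real.cosh ξ0) g3]
  have h2 := tanh_sub_tanh z ξ0
  have h3 : Real.sinh (z - ξ0) / (Real.cosh z * Real.cosh ξ0) ≤ (z - ξ0) / Real.cosh ξ0 ^2 := by
    rw [div_le_div_iff₀ (by positivity) (by positivity)]
    nlinarith [mul_le_mul_of_nonneg_right main hchξ.le]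
  linarith [h2, h3]

lemma L0_lt_one {l ξ0 : ℝ} (hl : 0 < l) (hξ : 0 < ξ0) (hfix : ξ0 = l * Real.tanh ξ0) :
    l / Real.cosh ξ0 ^ 2 < 1 := by
  have hsh : 0 < Real.sinh ξ0 := Real.sinh_pos_iff.mpr hξ
  have hch : 0 < Real.cosh ξ0 := Real.cosh_pos _
  have hls : l * Real.sinh ξ0 = ξ0 * Real.cosh ξ0 := by
    rw [Real.tanh_eq_sinh_div_cosh] at hfix
    field_simp at hfix
    linarith
  have hstrict : ξ0 < Real.sinh ξ0 * Real.cosh ξ0 := by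
    nlinarith [Real.self_lt_sinh_iff.mpr hξ, Real.one_le_cosh ξ0]
  rw [div_lt_one (by positivity)]
  nlinarith [mul_lt_mul_of_pos_right hstrict hch]

/-- linear-decay-with-vanishing-forcing lemma -/
lemma decay_to_zero {L : ℝ} (hL0 : 0 ≤ L) (hL1 : L < 1) (d u : ℕ → ℝ)
    (hd0 : ∀ k, 0 ≤ d k) (hrec : ∀ k, d (k+1) ≤ L * d k + u k)
    (hu : Tendsto u atTop (nhds 0)) : Tendsto d atTop (nhds 0) := by
  rw [Metric.tendsto_atTop] at hu ⊢
  intro ε hε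
  obtain ⟨K, hK⟩ := hu ((1 - L) * ε / 2) (by nlinarith)
  have claim : ∀ j : ℕ, d (K + j) ≤ L ^ j * d K + ε / 2 := by
    intro j
    induction j with
    | zero => simpa using by nlinarith [hd0 K]
    | succ j ih =>
      have h1 := hrec (K + j)
      have h2 : |u (K + j)| < (1 - L) * ε / 2 := by
        simpa [Real.dist_eq] using hK (K + j) (Nat.le_add_right K j)
      have h3 : u (K + j) ≤ (1 - L) * ε / 2 := le_of_lt (abs_lt.mp h2).2
      have h4 : L * d (K + j) ≤ L * (L ^ j * d K + ε / 2) :=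
        mul_le_mul_of_nonneg_left ih hL0
      have : K + (j + 1) = (K + j) + 1 := by ring
      rw [this]
      calc d ((K + j) + 1) ≤ L * d (K + j) + u (K + j) := h1
        _ ≤ L * (L ^ j * d K + ε / 2) + (1 - L) * ε / 2 := by linarith
        _ = L ^ (j+1) * d K + ε / 2 := by ring
  have hpow : Tendsto (fun j : ℕ => L ^ j * d K) atTop (nhds 0) := by
    simpa using (tendsto_pow_atTop_nhds_zero_of_lt_one hL0 hL1).mul_const (d K)
  rw [Metric.tendsto_atTop] at hpow
  obtain ⟨J, hJ⟩ := hpow (ε / 2) (by linarith)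
  refine ⟨K + J, fun k hk => ?_⟩
  have hkK : K ≤ k := le_trans (Nat.le_add_right K J) hk
  obtain ⟨j, rfl⟩ := Nat.exists_eq_add_of_le hkK
  have hjJ : J ≤ j := by omega
  have h5 := claim j
  have h6 := hJ j hjJ
  rw [Real.dist_eq] at h6 ⊢
  have h7 : L ^ j * d K ≤ |L ^ j * d K - 0| := by
    rw [sub_zero]; exact le_abs_self _
  have := hd0 (K + j)
  rw [abs_of_nonneg (by linarith : (0:ℝ) ≤ d (K + j) - 0)] at *
  linarith

/-- eventual lower bound for the third coordinate -/
lemma eventual_lower {l ξ0 : ℝ} (hl : 0 < l) (hξ : 0 < ξ0) (hfix : ξ0 = l * Real.tanh ξ0)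
    (ζ : ℕ → ℝ) (hpos : 0 < ζ 0) (hrec : ∀ k, l * Real.tanh (ζ k) ≤ ζ (k+1)) :
    ∀ a, a < ξ0 → ∃ N, ∀ k ≥ N, a ≤ ζ k := by
  set g : ℝ → ℝ := fun t => l * Real.tanh t with hg
  have haux : ∀ t, 0 < t → t ≤ ξ0 → t ≤ g t := by
    intro t ht htξ
    rcases lt_or_eq_of_le htξ with h | h
    · exact (chord_lt hl hξ hfix ht h).le
    · rw [h, hg]; exact le_of_eq hfix
  set m : ℕ → ℝ := fun k => g^[k] (min (ζ 0) ξ0) with hm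
  have hm0 : m 0 = min (ζ 0) ξ0 := rfl
  have hmsucc : ∀ k, m (k+1) = g (m k) := by
    intro k
    rw [hm]
    simp [Function.iterate_succ_apply']
  have hbasic : ∀ k, 0 < m k ∧ m k ≤ ξ0 ∧ m k ≤ ζ k := by
    intro k
    induction k with
    | zero => exact ⟨lt_min hpos hξ, min_le_right _ _, min_le_left _ _⟩
    | succ k ih =>
      obtain ⟨h1, h2, h3⟩ := ih
      refine ⟨?_, ?_, ?_⟩
      · rw [hmsucc]; exact mul_pos hl (tanh_pos h1)
      · rw [hmsucc]
        calc g (m k) ≤ g ξ0 := mul_le_mul_of_nonneg_left (tanh_monotone h2) hl.le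
          _ = ξ0 := hfix.symm
      · rw [hmsucc]
        calc g (m k) ≤ g (ζ k) := mul_le_mul_of_nonneg_left (tanh_monotone h3) hl.le
          _ ≤ ζ (k+1) := hrec k
  have hmono : Monotone m := by
    apply monotone_nat_of_le_succ
    intro k
    rw [hmsucc]
    exact haux (m k) (hbasic k).1 (hbasic k).2.1
  have hbdd : BddAbove (Set.range m) := ⟨ξ0, by rintro x ⟨k, rfl⟩; exact (hbasic k).2.1⟩
  set Lim := ⨆ k, m k with hLim
  have htend : Tendsto m atTop (nhds Lim) := tendsto_atTop_ciSup hmono hbdd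
  have htend' : Tendsto (fun k => m (k+1)) atTop (nhds Lim) :=
    htend.comp (tendsto_add_atTop_nat 1)
  have hgcont : Continuous g := by
    rw [hg]
    apply continuous_const.mul
    have : Real.tanh = fun x => Real.sinh x / Real.cosh x := by
      funext x; exact Real.tanh_eq_sinh_div_cosh x
    rw [this]
    exact Real.continuous_sinh.div Real.continuous_cosh (fun x => (Real.cosh_pos x).ne')
  have htend2 : Tendsto (fun k => g (m k)) atTop (nhds (g Lim)) :=
    (hgcont.continuousAt).tendsto.comp htend
  have hfixLim : g Lim = Lim := by
    apply tendsto_nhds_unique htend2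
    have : (fun k => g (m k)) = fun k => m (k+1) := by
      funext k; rw [hmsucc]
    rw [this]
    exact htend'
  have hLim0 : 0 < Lim := lt_of_lt_of_le (hbasic 0).1 (le_ciSup hbdd 0)
  have hLimξ : Lim ≤ ξ0 := ciSup_le fun k => (hbasic k).2.1
  have hLimeq : Lim = ξ0 := by
    rcases lt_or_eq_of_le hLimξ with h | h
    · exact absurd hfixLim (by have := chord_lt hl hξ hfix hLim0 h; rw [hg]; simp; linarith)
    · exact h
  intro a ha
  have : a < ⨆ k, m k := by rw [← hLim, hLimeq]; exact ha
  obtain ⟨N, hN⟩ := exists_lt_of_lt_ciSup this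
  exact ⟨N, fun k hk => le_trans (le_of_lt hN) (le_trans (hmono hk) (hbasic k).2.2)⟩


lemma Tmap_odd_infty {v : R3} (hev : ¬ Even (jfold (v 0) + jfold (v 1)))
    (hw : T0 (fold (v 0)) (fold (v 1)) (v 2) = 0) : Tmap v = ∞ := by
  simp only [Tmap]
  rw [if_neg hev, if_pos hw]

lemma step0 (l : ℝ) (v : R3) (hz : v 2 = 0) :
    Tl l v = ∞ ∨ ∃ w : R3, Tl l v = (w : OnePoint R3) ∧ w 2 = 0 := by
  have hT02 : T0 (fold (v 0)) (fold (v 1)) (v 2) 2 = 0 := by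
    by_cases h00 : fold (v 0) = 0 ∧ fold (v 1) = 0
    · rw [T0_special h00, mk3_apply_2, hz, Real.tanh_zero]
    · rw [T0_general h00, mk3_apply_2, hz, Real.sinh_zero, zero_mul, zero_div]
  by_cases hev : Even (jfold (v 0) + jfold (v 1))
  · right
    refine ⟨l • T0 (fold (v 0)) (fold (v 1)) (v 2), Tl_coe l v _ (Tmap_even hev), ?_⟩
    rw [smul_apply', hT02, mul_zero]
  · by_cases hw : T0 (fold (v 0)) (fold (v 1)) (v 2) = 0
    · left
      rw [Tl, Tmap_odd_infty hev hw]
      rfl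
    · right
      refine ⟨l • ((‖T0 (fold (v 0)) (fold (v 1)) (v 2)‖ ^ 2)⁻¹ •
        T0 (fold (v 0)) (fold (v 1)) (v 2)), Tl_coe l v _ (Tmap_odd hev hw), ?_⟩
      rw [smul_apply', smul_apply', hT02, mul_zero, mul_zero]

lemma sub_apply3 (a b : R3) (i : Fin 3) : (a - b) i = a i - b i := rfl

lemma Mxy_fold_le (a b : ℝ) : Mxy (fold a) (fold b) ≤ Mxy a b :=
  max_le_max (abs_fold_le_abs a) (abs_fold_le_abs b)



lemma sin_le_self {x : ℝ} (hx : 0 ≤ x) : Real.sin x ≤ x := by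
  rcases eq_or_lt_of_le hx with h | h
  · simp [← h]
  · exact (Real.sin_lt h).le

set_option maxHeartbeats 4000000 in
/-- for λ > 1, the basin of attraction of the fixed point (0,0,ξ₀) of T_λ
is exactly the open upper half-space. -/
theorem statement7 (l ξ0 : ℝ) (hl : 1 < l) (hpos : 0 < ξ0) (hfix : ξ0 = l * Real.tanh ξ0) :
    basin l (mk3 0 0 ξ0) = {v : R3 | 0 < v 2} := by
  have hl0 : 0 < l := by linarith
  ext v
  simp only [Set.mem_setOf_eq]
  constructor
  · -- basin ⊆ upper half space
    rintro ⟨hdef, hconv⟩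
    by_contra hz
    push_neg at hz
    have key : ∀ k, ∃ w : R3, (TlHat l)^[k] (↑v) = ↑w ∧ w 2 ≤ 0 := by
      intro k
      induction k with
      | zero => exact ⟨v, rfl, hz⟩
      | succ k ih =>
        obtain ⟨w, hw, hw2⟩ := ih
        have hit : (TlHat l)^[k+1] (↑v : OnePoint R3) = Tl l w := by
          rw [Function.iterate_succ_apply', hw]; rfl
        rcases lt_or_eq_of_le hw2 with hneg | h0
        · obtain ⟨w', c, hTl, hc0, hc1, heq, -, -⟩ := step l hl0 w (ne_of_lt hneg)
          refine ⟨w', by rw [hit, hTl], ?_⟩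
          have hsh : Real.sinh (w 2) < 0 := Real.sinh_neg_iff.mpr hneg
          have hch : 0 < Real.cosh (w 2) := Real.cosh_pos _
          have hs2 : 0 < Real.sinh (w 2) ^ 2 := by nlinarith
          have hP : 0 < c + Real.sinh (w 2) ^ 2 := by linarith
          by_contra hcon
          push_neg at hcon
          nlinarith [mul_pos hcon hP, mul_pos (mul_pos hl0 (neg_pos.mpr hsh)) hch]
        · rcases step0 l w h0 with hinf | ⟨w', hTl, hw2'⟩
          · exact absurd (by rw [hit, hinf]) (hdef (k+1))
          · exact ⟨w', by rw [hit, hTl], le_of_eq hw2'⟩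
    obtain ⟨N, hN⟩ := hconv ξ0 hpos
    obtain ⟨w, hw, hw2⟩ := key N
    have h1 := hN N le_rfl w hw
    have h2 : |(w - mk3 0 0 ξ0) 2| ≤ ‖w - mk3 0 0 ξ0‖ := abs_coord_le_norm _ 2
    rw [sub_apply3, mk3_apply_2] at h2
    have h3 : ξ0 ≤ |w 2 - ξ0| := by
      rw [abs_of_nonpos (by linarith)]; linarith
    linarith
  · -- upper half space ⊆ basin
    intro hv
    have exseq : ∀ k, ∃ w : R3, (TlHat l)^[k] (↑v) = ↑w ∧ 0 < w 2 := by
      intro k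
      induction k with
      | zero => exact ⟨v, rfl, hv⟩
      | succ k ih =>
        obtain ⟨w, hw, hw2⟩ := ih
        obtain ⟨w', c, hTl, hc0, hc1, heq, -, -⟩ := step l hl0 w (ne_of_gt hw2)
        refine ⟨w', by rw [Function.iterate_succ_apply', hw]; exact hTl, ?_⟩
        have hsh : 0 < Real.sinh (w 2) := Real.sinh_pos_iff.mpr hw2
        have hch : 0 < Real.cosh (w 2) := Real.cosh_pos _
        have hP : 0 < c + Real.sinh (w 2) ^ 2 := by nlinarith
        by_contra hcon
        push_neg at hcon
        nlinarith [mul_pos (mul_pos hl0 hsh) hch, mul_nonneg (neg_nonneg.mpr hcon) hP.le]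
    choose V hV1 hV2 using exseq
    have hv0 : V 0 = v := (Option.some.inj (hV1 0)).symm
    have hVsucc : ∀ k, Tl l (V k) = ↑(V (k+1)) := by
      intro k
      have h1 := hV1 (k+1)
      rw [Function.iterate_succ_apply', hV1 k] at h1
      exact h1
    have hstep : ∀ k, ∃ c : ℝ, 0 ≤ c ∧ c ≤ 1 ∧
        V (k+1) 2 * (c + Real.sinh (V k 2)^2) = l * (Real.sinh (V k 2) * Real.cosh (V k 2)) ∧
        Mxy (V (k+1) 0) (V (k+1) 1) * (c + Real.sinh (V k 2)^2) ≤
          l * (Real.sin (Mxy (fold (V k 0)) (fold (V k 1))) *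
            Real.cos (Mxy (fold (V k 0)) (fold (V k 1)))) ∧
        (|V k 0| < Real.pi/4 → |V k 1| < Real.pi/4 →
          c = Real.cos (Mxy (fold (V k 0)) (fold (V k 1)))^2) := by
      intro k
      obtain ⟨w, c, hTl, h1, h2, h3, h4, h5⟩ := step l hl0 (V k) (ne_of_gt (hV2 k))
      have hww : w = V (k+1) := Option.some.inj (hTl.symm.trans (hVsucc k))
      rw [hww] at h3 h4
      exact ⟨c, h1, h2, h3, h4, h5⟩
    choose c hc0 hc1 hceq hcineq hcpar using hstep
    have hshp : ∀ k, 0 < Real.sinh (V k 2) := fun k => Real.sinh_pos_iff.mpr (hV2 k)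
    have hchp : ∀ k, 0 < Real.cosh (V k 2) := fun k => Real.cosh_pos _
    have hPpos : ∀ k, 0 < c k + Real.sinh (V k 2)^2 := fun k => by nlinarith [hc0 k, hshp k]
    have hMnn : ∀ k, 0 ≤ Mxy (fold (V k 0)) (fold (V k 1)) := fun k => Mxy_nonneg _ _
    have hM4 : ∀ k, Mxy (fold (V k 0)) (fold (V k 1)) ≤ Real.pi/4 :=
      fun k => max_le (abs_fold_le_pi4 _) (abs_fold_le_pi4 _)
    have hsinnn : ∀ k, 0 ≤ Real.sin (Mxy (fold (V k 0)) (fold (V k 1))) :=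
      fun k => sinM_nonneg (abs_fold_le_pi4 _) (abs_fold_le_pi4 _)
    have hcosp : ∀ k, 0 < Real.cos (Mxy (fold (V k 0)) (fold (V k 1))) :=
      fun k => cosM_pos (abs_fold_le_pi4 _) (abs_fold_le_pi4 _)
    have hsinle : ∀ k, Real.sin (Mxy (fold (V k 0)) (fold (V k 1))) ≤
        Mxy (fold (V k 0)) (fold (V k 1)) := fun k => sin_le_self (hMnn k)
    -- E1 : lower recursion
    have E1 : ∀ k, l * Real.tanh (V k 2) ≤ V (k+1) 2 := by
      intro k
      rw [Real.tanh_eq_sinh_div_cosh, mul_div_assoc', div_le_iff₀ (hchp k)]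
      nlinarith [hceq k, hc1 k, hV2 (k+1), hchp k, hshp k, Real.cosh_sq (V k 2),
        mul_nonneg (hV2 (k+1)).le (sub_nonneg.mpr (hc1 k)), mul_pos (hV2 (k+1)) (hchp k)]
    -- E2 : upper recursion
    have E2 : ∀ k, V (k+1) 2 * Real.sinh (V k 2) ≤ l * Real.cosh (V k 2) := by
      intro k
      by_contra hcon
      push_neg at hcon
      nlinarith [hceq k, hc0 k, hshp k, mul_nonneg (hV2 (k+1)).le (hc0 k),
        mul_pos (hshp k) (hshp k), mul_lt_mul_of_pos_right hcon (hshp k)]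
    -- E3 : ratio recursion
    have E3 : ∀ k, Mxy (fold (V (k+1) 0)) (fold (V (k+1) 1)) *
        (Real.sinh (V k 2) * Real.cosh (V k 2)) ≤
        V (k+1) 2 * (Real.sin (Mxy (fold (V k 0)) (fold (V k 1))) *
          Real.cos (Mxy (fold (V k 0)) (fold (V k 1)))) := by
      intro k
      have h1 : Mxy (fold (V (k+1) 0)) (fold (V (k+1) 1)) ≤ Mxy (V (k+1) 0) (V (k+1) 1) :=
        Mxy_fold_le _ _
      apply le_of_mul_le_mul_right _ (hPpos k)
      have key1 := mul_le_mul_of_nonneg_right (hcineq k)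
        (mul_pos (hshp k) (hchp k)).le
      have key2 := congrArg (· * (Real.sin (Mxy (fold (V k 0)) (fold (V k 1))) *
        Real.cos (Mxy (fold (V k 0)) (fold (V k 1))))) (hceq k)
      simp only at key2
      have h2 := mul_le_mul_of_nonneg_right h1
        (mul_nonneg (mul_nonneg (hshp k).le (hchp k).le) (hPpos k).le)
      nlinarith [h2, key1, key2]
    -- eventual lower bound
    have hlowerAll := eventual_lower hl0 hpos hfix (fun k => V k 2)
      (by show 0 < V 0 2; rw [hv0]; exact hv) E1
    obtain ⟨N0, hN0⟩ := hlowerAll (ξ0/2) (by linarith)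
    have hth : 0 < Real.tanh (ξ0/2) := tanh_pos (by linarith)
    have hch2 : 1 < Real.cosh (ξ0/2) := Real.one_lt_cosh.mpr (by positivity)
    -- upper bound B for the third coordinate
    have hB : ∀ k, N0 ≤ k → V (k+1) 2 ≤ l / Real.tanh (ξ0/2) := by
      intro k hk
      have h2 : V (k+1) 2 ≤ l / Real.tanh (V k 2) := by
        rw [Real.tanh_eq_sinh_div_cosh, div_div_eq_mul_div, le_div_iff₀ (hshp k)]
        exact E2 k
      have h3 : Real.tanh (ξ0/2) ≤ Real.tanh (V k 2) := tanh_monotone (hN0 k hk)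
      calc V (k+1) 2 ≤ l / Real.tanh (V k 2) := h2
        _ ≤ l / Real.tanh (ξ0/2) := by
            apply div_le_div_of_nonneg_left hl0.le hth
            · exact h3
    -- ratio sequence
    have hRrec : ∀ k, N0 ≤ k →
        Mxy (fold (V (k+1) 0)) (fold (V (k+1) 1)) / V (k+1) 2 ≤
        (Real.cosh (ξ0/2))⁻¹ * (Mxy (fold (V k 0)) (fold (V k 1)) / V k 2) := by
      intro k hk
      have hq : (Real.cosh (ξ0/2))⁻¹ * (Mxy (fold (V k 0)) (fold (V k 1)) / V k 2) =
          Mxy (fold (V k 0)) (fold (V k 1)) / (V k 2 * Real.cosh (ξ0/2)) := by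
        rw [div_mul_eq_div_div_swap, div_div]
        ring
      rw [hq, div_le_div_iff₀ (hV2 (k+1))
        (mul_pos (hV2 k) (by positivity : (0:ℝ) < Real.cosh (ξ0/2)))]
      have f1 : Real.cosh (ξ0/2) ≤ Real.cosh (V k 2) := by
        rw [Real.cosh_le_cosh]
        rw [abs_of_pos (by linarith : (0:ℝ) < ξ0/2), abs_of_pos (hV2 k)]
        exact hN0 k hk
      have f2 : V k 2 ≤ Real.sinh (V k 2) := Real.self_le_sinh_iff.mpr (hV2 k).le
      have f3 := E3 k
      have f4 : Real.sin (Mxy (fold (V k 0)) (fold (V k 1))) *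
          Real.cos (Mxy (fold (V k 0)) (fold (V k 1))) ≤
          Mxy (fold (V k 0)) (fold (V k 1)) := by
        nlinarith [hsinle k, hsinnn k, Real.cos_le_one (Mxy (fold (V k 0)) (fold (V k 1))),
          hcosp k]
      have f5 : Real.cosh (ξ0/2) * V k 2 ≤ Real.cosh (V k 2) * Real.sinh (V k 2) := by
        apply mul_le_mul f1 f2 (hV2 k).le (hchp k).le
      nlinarith [mul_le_mul_of_nonneg_left f5 (hMnn (k+1)),
        mul_le_mul_of_nonneg_left f4 (hV2 (k+1)).le, f3]
    -- decay of the ratio sequence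
    have hq0 : (0:ℝ) ≤ (Real.cosh (ξ0/2))⁻¹ := by positivity
    have hq1 : (Real.cosh (ξ0/2))⁻¹ < 1 := by
      rw [inv_lt_one_iff₀]
      right; exact hch2
    have hdecayR := decay_to_zero hq0 hq1
      (fun j => Mxy (fold (V (j + N0) 0)) (fold (V (j + N0) 1)) / V (j + N0) 2)
      (fun _ => 0)
      (fun j => div_nonneg (hMnn _) (hV2 _).le)
      (fun j => by
        have h := hRrec (j + N0) (Nat.le_add_left N0 j)
        have he : j + 1 + N0 = (j + N0) + 1 := by ring
        simp only [he, add_zero]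
        exact h)
      tendsto_const_nhds
    have hRtend : Tendsto (fun k => Mxy (fold (V k 0)) (fold (V k 1)) / V k 2)
        atTop (nhds 0) := by
      rw [← tendsto_add_atTop_iff_nat N0]
      exact hdecayR
    -- M tends to 0
    have hMtend : Tendsto (fun k => Mxy (fold (V k 0)) (fold (V k 1))) atTop (nhds 0) := by
      have hbnd : Tendsto (fun k => (l / Real.tanh (ξ0/2)) *
          (Mxy (fold (V k 0)) (fold (V k 1)) / V k 2)) atTop (nhds 0) := by
        simpa using hRtend.const_mul (l / Real.tanh (ξ0/2))
      apply squeeze_zero' (Filter.Eventually.of_forall (fun k => hMnn k)) ?_ hbnd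
      · refine Filter.eventually_atTop.mpr ⟨N0 + 1, fun k hk => ?_⟩
        obtain ⟨j, rfl⟩ : ∃ j, k = j + 1 := ⟨k - 1, by omega⟩
        have hj : N0 ≤ j := by omega
        have hMeq : Mxy (fold (V (j+1) 0)) (fold (V (j+1) 1)) =
            (Mxy (fold (V (j+1) 0)) (fold (V (j+1) 1)) / V (j+1) 2) * V (j+1) 2 :=
          (div_mul_cancel₀ _ (hV2 (j+1)).ne').symm
        conv_lhs => rw [hMeq]
        exact (mul_le_mul_of_nonneg_left (hB j hj)
          (div_nonneg (hMnn _) (hV2 _).le)).trans_eq (mul_comm _ _)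
    -- horizontal size tends to 0
    have hsξ : 0 < Real.sinh (ξ0/2) := Real.sinh_pos_iff.mpr (by linarith)
    have hsc : ∀ k, Real.sin (Mxy (fold (V k 0)) (fold (V k 1))) *
        Real.cos (Mxy (fold (V k 0)) (fold (V k 1))) ≤ Mxy (fold (V k 0)) (fold (V k 1)) := by
      intro k
      nlinarith [hsinle k, hsinnn k, Real.cos_le_one (Mxy (fold (V k 0)) (fold (V k 1))), hcosp k]
    have hHshift : Tendsto (fun k => Mxy (V (k+1) 0) (V (k+1) 1)) atTop (nhds 0) := by
      have hbnd : Tendsto (fun k => (l / Real.sinh (ξ0/2)^2) *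
          Mxy (fold (V k 0)) (fold (V k 1))) atTop (nhds 0) := by
        simpa using hMtend.const_mul (l / Real.sinh (ξ0/2)^2)
      apply squeeze_zero' (Filter.Eventually.of_forall (fun k => Mxy_nonneg _ _)) ?_ hbnd
      · refine Filter.eventually_atTop.mpr ⟨N0, fun k hk => ?_⟩
        have h1 := hcineq k
        have h2 : Real.sinh (ξ0/2)^2 ≤ c k + Real.sinh (V k 2)^2 := by
          have h2' : Real.sinh (ξ0/2) ≤ Real.sinh (V k 2) := by
            rw [Real.sinh_le_sinh]; exact hN0 k hk
          nlinarith [hc0 k, hsξ]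
        have h3 : l * (Real.sin (Mxy (fold (V k 0)) (fold (V k 1))) *
            Real.cos (Mxy (fold (V k 0)) (fold (V k 1)))) ≤
            l * Mxy (fold (V k 0)) (fold (V k 1)) :=
          mul_le_mul_of_nonneg_left (hsc k) hl0.le
        show Mxy (V (k+1) 0) (V (k+1) 1) ≤
          l / Real.sinh (ξ0/2)^2 * Mxy (fold (V k 0)) (fold (V k 1))
        rw [div_mul_eq_mul_div, le_div_iff₀ (by positivity)]
        nlinarith [mul_le_mul_of_nonneg_left h2 (Mxy_nonneg (V (k+1) 0) (V (k+1) 1)), h1, h3]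
    have hHtend : Tendsto (fun k => Mxy (V k 0) (V k 1)) atTop (nhds 0) := by
      rw [← tendsto_add_atTop_iff_nat 1]
      exact hHshift
    -- eventual smallness of the coordinates
    obtain ⟨N1, hN1⟩ := (Metric.tendsto_atTop.mp hHtend) (Real.pi/4) (by positivity)
    have hsmall : ∀ k, N1 ≤ k → |V k 0| < Real.pi/4 ∧ |V k 1| < Real.pi/4 := by
      intro k hk
      have h := hN1 k hk
      rw [Real.dist_eq, sub_zero, abs_of_nonneg (Mxy_nonneg _ _)] at h
      exact ⟨lt_of_le_of_lt (le_max_left _ _) h, lt_of_le_of_lt (le_max_right _ _) h⟩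
    have hsin34 : ∀ k, Real.sin (Mxy (fold (V k 0)) (fold (V k 1)))^2 ≤ 3/4 := by
      intro k
      nlinarith [hsinle k, hM4 k, hMnn k, hsinnn k, Real.pi_lt_d2]
    -- E5 : refined upper recursion in the even regime
    have E5 : ∀ k, N1 ≤ k → V (k+1) 2 ≤ l * Real.tanh (V k 2) +
        4*l*(Mxy (fold (V k 0)) (fold (V k 1)))^2 := by
      intro k hk
      have hck : c k = Real.cos (Mxy (fold (V k 0)) (fold (V k 1)))^2 :=
        hcpar k (hsmall k hk).1 (hsmall k hk).2
      have hc_expand : c k = 1 - Real.sin (Mxy (fold (V k 0)) (fold (V k 1)))^2 := by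
        rw [hck]
        linarith [Real.sin_sq_add_cos_sq (Mxy (fold (V k 0)) (fold (V k 1)))]
      have hs2M : Real.sin (Mxy (fold (V k 0)) (fold (V k 1)))^2 ≤
          Mxy (fold (V k 0)) (fold (V k 1))^2 := by
        nlinarith [hsinle k, hsinnn k]
      have hP14 : 1/4 ≤ c k + Real.sinh (V k 2)^2 := by
        nlinarith [hsin34 k, sq_nonneg (Real.sinh (V k 2))]
      have hshch : Real.sinh (V k 2) ≤ Real.cosh (V k 2) := by
        nlinarith [Real.cosh_sub_sinh (V k 2), Real.exp_pos (-(V k 2))]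
      have key : V (k+1) 2 * Real.cosh (V k 2) ≤ l * Real.sinh (V k 2) +
          4*l*(Mxy (fold (V k 0)) (fold (V k 1)))^2 * Real.cosh (V k 2) := by
        have hA := congrArg (· * Real.cosh (V k 2)) (hceq k)
        simp only at hA
        by_contra hcon
        push_neg at hcon
        have e1 : l * Real.sinh (V k 2) * (c k) = l * Real.sinh (V k 2)
            - l * Real.sinh (V k 2) * Real.sin (Mxy (fold (V k 0)) (fold (V k 1)))^2 := by
          linear_combination (l * Real.sinh (V k 2)) * hc_expand
        have e2 : l * Real.sinh (V k 2) * Real.cosh (V k 2)^2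
            = l * Real.sinh (V k 2) * Real.sinh (V k 2)^2 + l * Real.sinh (V k 2) := by
          linear_combination (l * Real.sinh (V k 2)) * (Real.cosh_sq (V k 2))
        nlinarith [hA, e1, e2,
          mul_lt_mul_of_pos_right hcon (hPpos k),
          mul_nonneg (mul_nonneg hl0.le
            (sq_nonneg (Real.sin (Mxy (fold (V k 0)) (fold (V k 1))))))
            (sub_nonneg.mpr hshch),
          mul_nonneg (mul_nonneg hl0.le (hchp k).le) (sub_nonneg.mpr hs2M),
          mul_nonneg (mul_nonneg (mul_nonneg hl0.le (hchp k).le)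
            (sq_nonneg (Mxy (fold (V k 0)) (fold (V k 1)))))
            (by linarith : (0:ℝ) ≤ 4*(c k + Real.sinh (V k 2)^2) - 1)]
      have h6 : V (k+1) 2 ≤ (l * Real.sinh (V k 2) +
          4*l*(Mxy (fold (V k 0)) (fold (V k 1)))^2 * Real.cosh (V k 2)) /
          Real.cosh (V k 2) := (le_div_iff₀ (hchp k)).mpr key
      have h7 : (l * Real.sinh (V k 2) +
          4*l*(Mxy (fold (V k 0)) (fold (V k 1)))^2 * Real.cosh (V k 2)) /
          Real.cosh (V k 2) = l * (Real.sinh (V k 2)/Real.cosh (V k 2)) +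
          4*l*(Mxy (fold (V k 0)) (fold (V k 1)))^2 := by
        field_simp
      rw [Real.tanh_eq_sinh_div_cosh]
      rw [h7] at h6
      linarith
    -- the overshoot sequence
    have hL00 : (0:ℝ) ≤ l / Real.cosh ξ0^2 := by positivity
    have hL01 : l / Real.cosh ξ0^2 < 1 := L0_lt_one hl0 hpos hfix
    have hdrec : ∀ k, N1 ≤ k → max (V (k+1) 2 - ξ0) 0 ≤
        (l / Real.cosh ξ0^2) * max (V k 2 - ξ0) 0 +
        4*l*(Mxy (fold (V k 0)) (fold (V k 1)))^2 := by
      intro k hk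
      have h5 := E5 k hk
      have hu0 : (0:ℝ) ≤ 4*l*(Mxy (fold (V k 0)) (fold (V k 1)))^2 := by positivity
      have hd0 : (0:ℝ) ≤ (l / Real.cosh ξ0^2) * max (V k 2 - ξ0) 0 :=
        mul_nonneg hL00 (le_max_right _ _)
      apply max_le _ (by linarith)
      rcases le_or_gt (V k 2) ξ0 with hle | hgt
      · have h8 : l * Real.tanh (V k 2) ≤ ξ0 := by
          calc l * Real.tanh (V k 2) ≤ l * Real.tanh ξ0 :=
              mul_le_mul_of_nonneg_left (tanh_monotone hle) hl0.le
            _ = ξ0 := hfix.symm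
        linarith
      · have htg := tangent_le hpos (hV2 k).le
        have h9 : l * ((V k 2 - ξ0)/Real.cosh ξ0^2) = (l / Real.cosh ξ0^2) * (V k 2 - ξ0) := by
          ring
        have h8 : l * Real.tanh (V k 2) ≤ ξ0 + (l / Real.cosh ξ0^2) * (V k 2 - ξ0) := by
          nlinarith [mul_le_mul_of_nonneg_left htg hl0.le]
        have hdk : max (V k 2 - ξ0) 0 = V k 2 - ξ0 := max_eq_left (by linarith)
        rw [hdk]
        linarith
    have hutend : Tendsto (fun k => 4*l*(Mxy (fold (V k 0)) (fold (V k 1)))^2)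
        atTop (nhds 0) := by
      have h1 := hMtend.mul hMtend
      rw [mul_zero] at h1
      have h2 := h1.const_mul (4*l)
      rw [mul_zero] at h2
      have he : (fun k => 4*l*(Mxy (fold (V k 0)) (fold (V k 1)))^2) =
          fun k => (4*l) * (Mxy (fold (V k 0)) (fold (V k 1))
            * Mxy (fold (V k 0)) (fold (V k 1))) := by
        funext k; ring
      rw [he]
      exact h2
    have hdtend : Tendsto (fun k => max (V k 2 - ξ0) 0) atTop (nhds 0) := by
      rw [← tendsto_add_atTop_iff_nat N1]
      apply decay_to_zero hL00 hL01 _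
        (fun j => 4*l*(Mxy (fold (V (j + N1) 0)) (fold (V (j + N1) 1)))^2)
        (fun j => le_max_right _ _)
        (fun j => by
          have h := hdrec (j + N1) (Nat.le_add_left N1 j)
          have he : j + 1 + N1 = (j + N1) + 1 := by ring
          simp only [he]
          exact h)
        (by
          have := hutend.comp (tendsto_add_atTop_nat N1)
          exact this)
    -- conclusion : basin membership
    refine ⟨fun k => by rw [hV1 k]; exact OnePoint.coe_ne_infty _, fun ε hε => ?_⟩
    obtain ⟨NA, hNA⟩ := Metric.tendsto_atTop.mp hHtend (ε/3) (by linarith)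
    obtain ⟨NB, hNB⟩ := Metric.tendsto_atTop.mp hdtend (ε/3) (by linarith)
    obtain ⟨NC, hNC⟩ := hlowerAll (ξ0 - ε/3) (by linarith)
    refine ⟨max (max NA NB) NC, fun k hk w hw => ?_⟩
    have hwV : w = V k := (Option.some.inj ((hV1 k).symm.trans hw)).symm
    subst hwV
    have hkA : NA ≤ k := le_trans (le_trans (le_max_left _ _) (le_max_left _ _)) hk
    have hkB : NB ≤ k := le_trans (le_trans (le_max_right _ _) (le_max_left _ _)) hk
    have hkC : NC ≤ k := le_trans (le_max_right _ _) hk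
    have hH := hNA k hkA
    rw [Real.dist_eq, sub_zero, abs_of_nonneg (Mxy_nonneg _ _)] at hH
    have hd := hNB k hkB
    rw [Real.dist_eq, sub_zero, abs_of_nonneg (le_max_right _ _)] at hd
    have hlow := hNC k hkC
    have h0c : |(V k - mk3 0 0 ξ0) 0| ≤ ε/3 := by
      rw [sub_apply3, mk3_apply_0, sub_zero]
      exact (le_max_left _ _).trans hH.le
    have h1c : |(V k - mk3 0 0 ξ0) 1| ≤ ε/3 := by
      rw [sub_apply3, mk3_apply_1, sub_zero]
      exact (le_max_right _ _).trans hH.le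
    have h2c : |(V k - mk3 0 0 ξ0) 2| ≤ ε/3 := by
      rw [sub_apply3, mk3_apply_2, abs_le]
      constructor
      · linarith
      · linarith [le_max_left (V k 2 - ξ0) 0]
    have hcoord : ∀ i : Fin 3, |(V k - mk3 0 0 ξ0) i| ≤ ε/3 := by
      intro i
      fin_cases i
      · exact h0c
      · exact h1c
      · exact h2c
    have hnorm := norm_le_of_coords hcoord
    linarith
end
end

section
/- For every λ>0 and every (x,y,z)∈ℝ³ with z>0, the value T_λ(x,y,z) is a finite point of ℝ³ whose third coordinate satisfies (T_λ)₃(x,y,z) ≥ λ·tanh z. -/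
noncomputable section

open Real Filter Topology Set MeasureTheory
open scoped Classical OnePoint

lemma norm_mk3 (x y z : ℝ) : ‖mk3 x y z‖ ^ 2 = x ^ 2 + y ^ 2 + z ^ 2 := by
  rw [EuclideanSpace.norm_eq, Real.sq_sqrt (by positivity)]
  simp [mk3, Fin.sum_univ_three, sq_abs]

lemma key1 (c s ch : ℝ) (hs : 0 < s) (hch : 0 < ch) (hch2 : ch^2 = 1 + s^2)
    (hc1 : c^2 ≤ 1) : s / ch ≤ s * ch / (c^2 + s^2) := by
  have hD : 0 < c^2 + s^2 := by nlinarith [sq_nonneg c]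
  rw [div_le_div_iff₀ hch hD]
  nlinarith

lemma key2 (c si s ch : ℝ) (hs : 0 < s) (hch : 0 < ch) (hch2 : ch^2 = 1 + s^2)
    (hcs : si^2 + c^2 = 1) :
    s / ch ≤ ((c^2 * si^2 + s^2 * ch^2) / (c^2 + s^2)^2)⁻¹ * (s * ch / (c^2 + s^2)) := by
  have hD : 0 < c^2 + s^2 := by nlinarith [sq_nonneg c, sq_nonneg si]
  have hN : 0 < c^2 * si^2 + s^2 * ch^2 := by nlinarith [sq_nonneg (c*si)]
  rw [inv_div, div_mul_div_comm, div_le_div_iff₀ hch (by positivity)]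
  nlinarith [mul_pos hs hD, sq_nonneg (c*c), sq_nonneg (c*s),
    mul_pos (mul_pos hs hD) (mul_pos hs hch), sq_nonneg c, sq_nonneg si,
    mul_nonneg (mul_nonneg hs.le hD.le) (sq_nonneg c)]

lemma auxT0 (X Y z : ℝ) (hz : 0 < z) :
    Real.tanh z ≤ T0 X Y z 2 ∧ T0 X Y z ≠ 0 ∧
      Real.tanh z ≤ (‖T0 X Y z‖ ^ 2)⁻¹ * T0 X Y z 2 := by
  have hs : 0 < Real.sinh z := Real.sinh_pos_iff.2 hz
  have hch : 0 < Real.cosh z := Real.cosh_pos z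
  have hch2 : Real.cosh z ^ 2 = 1 + Real.sinh z ^ 2 := by rw [Real.cosh_sq]; ring
  have htanh : Real.tanh z = Real.sinh z / Real.cosh z := Real.tanh_eq_sinh_div_cosh z
  have htpos : 0 < Real.tanh z := by rw [htanh]; positivity
  have htlt : Real.tanh z < 1 := by rw [htanh, div_lt_one hch]; nlinarith
  set c := Real.cos (Mxy X Y) with hc
  set si := Real.sin (Mxy X Y) with hsi
  have hcs : si ^ 2 + c ^ 2 = 1 := Real.sin_sq_add_cos_sq _
  have hc1 : c ^ 2 ≤ 1 := by nlinarith [sq_nonneg si]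
  have hD : 0 < c ^ 2 + Real.sinh z ^ 2 := by nlinarith [sq_nonneg c]
  unfold T0
  split_ifs with h
  · refine ⟨le_of_eq rfl, ?_, ?_⟩
    · intro heq
      have h2 : mk3 0 0 (Real.tanh z) 2 = (0 : R3) 2 := by rw [heq]
      have h3 : Real.tanh z = 0 := h2
      linarith
    · have hval : mk3 0 0 (Real.tanh z) 2 = Real.tanh z := rfl
      rw [hval, norm_mk3]
      have he : (0:ℝ)^2 + 0^2 + Real.tanh z ^ 2 = Real.tanh z ^ 2 := by ring
      rw [he]
      have h4 : (Real.tanh z ^ 2)⁻¹ * Real.tanh z = 1 / Real.tanh z := by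
        field_simp
      rw [h4, le_div_iff₀ htpos]
      nlinarith
  · have hr2 : 0 < X ^ 2 + Y ^ 2 := by
      rcases not_and_or.mp h with h' | h'
      · positivity
      · positivity
    set r := Real.sqrt (X ^ 2 + Y ^ 2) with hr
    have hrpos : 0 < r := Real.sqrt_pos.2 hr2
    have hr2eq : r ^ 2 = X ^ 2 + Y ^ 2 := Real.sq_sqrt hr2.le
    set D := c ^ 2 + Real.sinh z ^ 2 with hDdef
    have hval2 : mk3 (X * c * si / (r * D)) (Y * c * si / (r * D))
        (Real.sinh z * Real.cosh z / D) 2 = Real.sinh z * Real.cosh z / D := rfl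
    have hwpos : 0 < Real.sinh z * Real.cosh z / D := by positivity
    refine ⟨?_, ?_, ?_⟩
    · rw [hval2, htanh]
      exact key1 c _ _ hs hch hch2 hc1
    · intro heq
      have h2 : mk3 (X * c * si / (r * D)) (Y * c * si / (r * D))
          (Real.sinh z * Real.cosh z / D) 2 = (0 : R3) 2 := by rw [heq]
      rw [hval2] at h2
      have h3 : Real.sinh z * Real.cosh z / D = 0 := h2
      linarith
    · rw [hval2, norm_mk3]
      have hn : (X * c * si / (r * D)) ^ 2 + (Y * c * si / (r * D)) ^ 2 +
          (Real.sinh z * Real.cosh z / D) ^ 2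
          = (c ^ 2 * si ^ 2 + Real.sinh z ^ 2 * Real.cosh z ^ 2) / D ^ 2 := by
        have hmul : (r * D) ^ 2 = (X ^ 2 + Y ^ 2) * D ^ 2 := by rw [mul_pow, hr2eq]
        rw [div_pow, div_pow, div_pow, hmul]
        field_simp
      rw [hn, htanh]
      exact key2 c si _ _ hs hch hch2 hcs

/-- for every λ > 0 and every (x,y,z) with z > 0, T_λ(x,y,z) is a finite
point of ℝ³ whose third coordinate is at least λ·tanh z. -/
theorem statement10 (l x y z : ℝ) (hl : 0 < l) (hz : 0 < z) :
    ∃ w : R3, Tl l (mk3 x y z) = ↑w ∧ l * Real.tanh z ≤ w 2 := by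
  obtain ⟨hA, hB, hD⟩ := auxT0 (fold x) (fold y) z hz
  have h0 : mk3 x y z 0 = x := rfl
  have h1 : mk3 x y z 1 = y := rfl
  have h2 : mk3 x y z 2 = z := rfl
  set w := T0 (fold x) (fold y) z with hw
  by_cases hev : Even (jfold x + jfold y)
  · refine ⟨l • w, ?_, ?_⟩
    · simp only [Tl, Tmap, h0, h1, h2, if_pos hev]
      rfl
    · have hsm : (l • w) 2 = l * w 2 := rfl
      rw [hsm]
      exact mul_le_mul_of_nonneg_left hA hl.le
  · refine ⟨l • ((‖w‖ ^ 2)⁻¹ • w), ?_, ?_⟩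
    · simp only [Tl, Tmap, h0, h1, h2, if_neg hev, if_neg (show ¬ T0 (fold x) (fold y) z = 0 from hB)]
      rfl
    · have hsm : (l • ((‖w‖ ^ 2)⁻¹ • w)) 2 = l * ((‖w‖ ^ 2)⁻¹ * w 2) := rfl
      rw [hsm]
      exact mul_le_mul_of_nonneg_left hD hl.le
end
end
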